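/- Continuity of the driver in the jump variable: Let u : ℝ → ℝ be a bounded Borel function with ∫ u² dν < ∞ and let (u_n)_{n≥1} be Borel functions with ∫ u_n² dν < ∞ for all n, sup_n sup_e |u_n(e)| < ∞, and ∫ (u_n − u)² dν → 0 as n → ∞. Then f(z, u_n) → f(z, u) as n → ∞, for every z ∈ ℝ. -/

import Mathlib

open MeasureTheory Set

noncomputable section

/-- The no-signal part `f¹(z,u,p)` of the driver. -/
def f1d (ν : Measure ℝ) (η γ : ℝ → ℝ) (lam sig Cke : ℝ)
    (z : ℝ) (u : ℝ → ℝ) (p : ℝ) : ℝ :=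
  lam / 2 * (sig * p - (z + Cke / lam)) ^ 2
    + ∫ e in {e | γ e = 0}, ((Real.exp (lam * (u e - p * η e)) - 1) / lam - u e) ∂ν

/-- The signal part `f²(g,u,p)` of the driver. -/
def f2d (η γ : ℝ → ℝ) (K : ℝ → Measure ℝ) (lam : ℝ)
    (g : ℝ) (u : ℝ → ℝ) (p : ℝ) : ℝ :=
  ∫ e in {e | γ e = g}, ((Real.exp (lam * (u e - p * η e)) - 1) / lam - u e) ∂(K g)

/-- The driver `f(z,u)` of the BSDE for exponential utility maximization with signals. -/
def fdrv (ν μ : Measure ℝ) (η γ : ℝ → ℝ) (K : ℝ → Measure ℝ)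
    (lam sig Cke pil pib : ℝ) (z : ℝ) (u : ℝ → ℝ) : ℝ :=
  (⨅ p : Set.Icc (-pil) pib, f1d ν η γ lam sig Cke z u p)
    + (∫ g in ({0}ᶜ : Set ℝ), (⨅ p : Set.Icc (-pil) pib, f2d η γ K lam g u p) ∂μ)
    - Cke * z - Cke ^ 2 / (2 * lam)

set_option maxHeartbeats 1000000

open scoped ENNReal NNReal

section AuxiliaryLemmas

private lemma exp_ineq1 (x : ℝ) : |Real.exp x - 1| ≤ |x| * Real.exp |x| := by
  rcases le_or_gt 0 x with hx | hx
  · rw [abs_of_nonneg hx, abs_of_nonneg (by linarith [Real.add_one_le_exp x] : (0:ℝ) ≤ Real.exp x - 1)]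
    have h := Real.add_one_le_exp (-x)
    have h2 := Real.exp_pos x
    have h3 : Real.exp (-x) * Real.exp x = 1 := by
      rw [← Real.exp_add]; simp
    nlinarith
  · rw [abs_of_neg hx, abs_of_nonpos (by linarith [Real.exp_lt_one_iff.mpr hx] : Real.exp x - 1 ≤ 0)]
    have h := Real.add_one_le_exp x
    have h4 := Real.one_le_exp (by linarith : (0:ℝ) ≤ -x)
    nlinarith

private lemma exp_ineq2 (x : ℝ) : |Real.exp x - 1 - x| ≤ 3 * x ^ 2 * Real.exp |x| := by
  rcases le_or_gt |x| 1 with hx | hx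
  · have h := Real.abs_exp_sub_one_sub_id_le hx
    have h2 := Real.one_le_exp (abs_nonneg x)
    nlinarith [sq_nonneg x]
  · have h1 : Real.exp x ≤ Real.exp |x| := Real.exp_le_exp.mpr (le_abs_self x)
    have h2 := Real.one_le_exp (abs_nonneg x)
    have h3 : |x| ≤ Real.exp |x| := by linarith [Real.add_one_le_exp |x|]
    have h4 : (1:ℝ) ≤ x ^ 2 := by nlinarith [abs_nonneg x, sq_abs x]
    have h5 : |Real.exp x - 1 - x| ≤ Real.exp x + 1 + |x| := by
      have := abs_sub_abs_le_abs_sub (Real.exp x - 1) x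
      have := abs_add_le (Real.exp x - 1) (-x)
      have := abs_add_le (Real.exp x) (-1:ℝ)
      have h6 : |Real.exp x| = Real.exp x := abs_of_pos (Real.exp_pos x)
      calc |Real.exp x - 1 - x| ≤ |Real.exp x - 1| + |x| := by
            rw [sub_eq_add_neg (Real.exp x - 1) x]; simpa using abs_add_le (Real.exp x - 1) (-x)
        _ ≤ (Real.exp x + 1) + |x| := by
            have : |Real.exp x - 1| ≤ |Real.exp x| + 1 := by
              have h8 := abs_add_le (Real.exp x) (-1:ℝ)
              rw [← sub_eq_add_neg, abs_neg, abs_one] at h8; exact h8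
            rw [h6] at this; linarith
    have h7 := Real.exp_pos x
    nlinarith

private lemma abs_ciInf_sub_ciInf {ι : Sort*} [Nonempty ι] {A B : ι → ℝ} {ε : ℝ}
    (hA : BddBelow (Set.range A)) (hB : BddBelow (Set.range B))
    (h : ∀ i, |A i - B i| ≤ ε) : |(⨅ i, A i) - ⨅ i, B i| ≤ ε := by
  rw [abs_le]
  constructor
  · have : (⨅ i, B i) - ε ≤ ⨅ i, A i := by
      apply le_ciInf
      intro i
      have h1 := ciInf_le hB i
      have h2 := (abs_le.1 (h i)).1
      linarith
    linarith
  · have : (⨅ i, A i) - ε ≤ ⨅ i, B i := by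
      apply le_ciInf
      intro i
      have h1 := ciInf_le hA i
      have h2 := (abs_le.1 (h i)).2
      linarith
    linarith

private lemma iInf_eq_iInf_denseSeq {a b : ℝ} [Nonempty (Set.Icc a b)] {F : ℝ → ℝ}
    (hF : Continuous F)
    (hbdd : BddBelow (Set.range fun p : Set.Icc a b => F p)) :
    (⨅ p : Set.Icc a b, F p)
      = ⨅ n : ℕ, F (TopologicalSpace.denseSeq (Set.Icc a b) n) := by
  have hbdd2 : BddBelow (Set.range fun n : ℕ =>
      F (TopologicalSpace.denseSeq (Set.Icc a b) n)) := by
    apply hbdd.mono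
    rintro x ⟨n, rfl⟩
    exact ⟨TopologicalSpace.denseSeq (Set.Icc a b) n, rfl⟩
  apply le_antisymm
  · exact le_ciInf fun n => ciInf_le hbdd _
  · apply le_ciInf
    intro p
    have hd := TopologicalSpace.denseRange_denseSeq (Set.Icc a b)
    have hp : p ∈ closure (Set.range (TopologicalSpace.denseSeq (Set.Icc a b))) := hd p
    obtain ⟨φ, hφmem, hφtend⟩ := mem_closure_iff_seq_limit.1 hp
    have htend : Filter.Tendsto (fun k => F (φ k)) Filter.atTop (nhds (F p)) := by
      have hc : Continuous fun q : Set.Icc a b => F q := hF.comp continuous_subtype_val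
      exact (hc.tendsto p).comp hφtend
    apply ge_of_tendsto' htend
    intro k
    obtain ⟨n, hn⟩ := hφmem k
    calc (⨅ n : ℕ, F (TopologicalSpace.denseSeq (Set.Icc a b) n))
        ≤ F (TopologicalSpace.denseSeq (Set.Icc a b) n) := ciInf_le hbdd2 n
      _ = F (φ k) := by rw [hn]

/-- integrand of the driver -/
noncomputable def phiF (lam : ℝ) (η v : ℝ → ℝ) (p e : ℝ) : ℝ :=
  (Real.exp (lam * (v e - p * η e)) - 1) / lam - v e

section
variable {lam R : ℝ} {η v w : ℝ → ℝ} {p e : ℝ}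

lemma phiF_eq (hlam : 0 < lam) :
    phiF lam η v p e
      = (Real.exp (lam * (v e - p * η e)) - 1 - lam * (v e - p * η e)) / lam - p * η e := by
  unfold phiF
  field_simp
  ring

lemma phiF_abs_le (hlam : 0 < lam) {B : ℝ}
    (harg : |lam * (v e - p * η e)| ≤ R) (hv : |v e| ≤ B) :
    |phiF lam η v p e| ≤ (Real.exp R + 1) / lam + B := by
  unfold phiF
  have h1 : Real.exp (lam * (v e - p * η e)) ≤ Real.exp R :=
    Real.exp_le_exp.mpr ((le_abs_self _).trans harg)
  have h2 := Real.exp_pos (lam * (v e - p * η e))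
  have h3 : |(Real.exp (lam * (v e - p * η e)) - 1) / lam|
      ≤ (Real.exp R + 1) / lam := by
    rw [abs_div, abs_of_pos hlam]
    gcongr
    rw [abs_le]; constructor <;> nlinarith
  calc |(Real.exp (lam * (v e - p * η e)) - 1) / lam - v e|
      ≤ |(Real.exp (lam * (v e - p * η e)) - 1) / lam| + |v e| := abs_sub _ _
    _ ≤ (Real.exp R + 1) / lam + B := by linarith

lemma phiF_quad (hlam : 0 < lam) (harg : |lam * (v e - p * η e)| ≤ R) :
    |phiF lam η v p e|
      ≤ 6 * lam * Real.exp R * ((v e) ^ 2 + (p * η e) ^ 2) + |p * η e| := by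
  rw [phiF_eq hlam]
  set a := lam * (v e - p * η e) with ha
  have h2 : Real.exp |a| ≤ Real.exp R := Real.exp_le_exp.mpr harg
  have h3 : a ^ 2 ≤ lam ^ 2 * (2 * ((v e) ^ 2 + (p * η e) ^ 2)) := by
    rw [ha]; nlinarith [sq_nonneg (v e + p * η e), sq_nonneg lam]
  have h4 : |(Real.exp a - 1 - a) / lam| ≤ 6 * lam * Real.exp R * ((v e) ^ 2 + (p * η e) ^ 2) := by
    rw [abs_div, abs_of_pos hlam, div_le_iff₀ hlam]
    calc |Real.exp a - 1 - a| ≤ 3 * a ^ 2 * Real.exp |a| := exp_ineq2 a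
      _ ≤ 3 * a ^ 2 * Real.exp R := by
          apply mul_le_mul_of_nonneg_left h2 (by positivity)
      _ ≤ 3 * (lam ^ 2 * (2 * ((v e) ^ 2 + (p * η e) ^ 2))) * Real.exp R := by
          apply mul_le_mul_of_nonneg_right (by linarith) (Real.exp_pos R).le
      _ = 6 * lam * Real.exp R * ((v e) ^ 2 + (p * η e) ^ 2) * lam := by ring
  calc |(Real.exp a - 1 - a) / lam - p * η e|
      ≤ |(Real.exp a - 1 - a) / lam| + |p * η e| := abs_sub _ _
    _ ≤ _ := by linarith

lemma phiF_lower (hlam : 0 < lam) : -(|p * η e|) ≤ phiF lam η v p e := by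
  rw [phiF_eq hlam]
  set a := lam * (v e - p * η e)
  have h1 : 0 ≤ (Real.exp a - 1 - a) / lam :=
    div_nonneg (by linarith [Real.add_one_le_exp a]) hlam.le
  have h2 := le_abs_self (p * η e)
  linarith

lemma phiF_diff (hlam : 0 < lam)
    (ha : |lam * (v e - p * η e)| ≤ R) (hb : |lam * (w e - p * η e)| ≤ R) :
    |phiF lam η v p e - phiF lam η w p e|
      ≤ lam * Real.exp (3 * R) * (|v e - w e| * (4 * (|v e| + |w e|) + |p * η e|)) := by
  have hR0 : 0 ≤ R := le_trans (abs_nonneg _) ha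
  set a := lam * (v e - p * η e) with hadef
  set b := lam * (w e - p * η e) with hbdef
  have hab : a - b = lam * (v e - w e) := by rw [hadef, hbdef]; ring
  have hdiff : phiF lam η v p e - phiF lam η w p e
      = (Real.exp a - Real.exp b - (a - b)) / lam := by
    unfold phiF
    rw [hab]
    field_simp
    ring
  have hsplit : Real.exp a - Real.exp b - (a - b)
      = (Real.exp b - 1) * (Real.exp (a - b) - 1) + (Real.exp (a - b) - 1 - (a - b)) := by
    have h : Real.exp a = Real.exp b * Real.exp (a - b) := by
      rw [← Real.exp_add]; ring_nf
    rw [h]; ring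
  have habs_ab : |a - b| ≤ 2 * R := by
    calc |a - b| ≤ |a| + |b| := abs_sub a b
      _ ≤ 2 * R := by linarith
  have habeq : |a - b| = lam * |v e - w e| := by
    rw [hab, abs_mul, abs_of_pos hlam]
  have h1 : |Real.exp b - 1| ≤ (lam * (|w e| + |p * η e|)) * Real.exp R := by
    have hb1 : |b| ≤ lam * (|w e| + |p * η e|) := by
      rw [hbdef, abs_mul, abs_of_pos hlam]
      have := abs_sub (w e) (p * η e)
      nlinarith
    calc |Real.exp b - 1| ≤ |b| * Real.exp |b| := exp_ineq1 b
      _ ≤ (lam * (|w e| + |p * η e|)) * Real.exp R :=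
        mul_le_mul hb1 (Real.exp_le_exp.mpr hb) (Real.exp_pos _).le (by positivity)
  have h2 : |Real.exp (a - b) - 1| ≤ (lam * |v e - w e|) * Real.exp (2 * R) := by
    calc |Real.exp (a - b) - 1| ≤ |a - b| * Real.exp |a - b| := exp_ineq1 (a - b)
      _ ≤ |a - b| * Real.exp (2 * R) :=
          mul_le_mul_of_nonneg_left (Real.exp_le_exp.mpr habs_ab) (abs_nonneg _)
      _ = (lam * |v e - w e|) * Real.exp (2 * R) := by rw [habeq]
  have h3 : |Real.exp (a - b) - 1 - (a - b)|
      ≤ 3 * (lam ^ 2 * (|v e - w e| * (|v e| + |w e|))) * Real.exp (2 * R) := by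
    have h4 : (a - b) ^ 2 ≤ lam ^ 2 * (|v e - w e| * (|v e| + |w e|)) := by
      have h5 : (a - b) ^ 2 = lam ^ 2 * (|v e - w e| * |v e - w e|) := by
        rw [hab, mul_pow, pow_two (v e - w e), ← abs_mul_abs_self (v e - w e)]
      rw [h5]
      have h6 : |v e - w e| * |v e - w e| ≤ |v e - w e| * (|v e| + |w e|) :=
        mul_le_mul_of_nonneg_left (abs_sub _ _) (abs_nonneg _)
      exact mul_le_mul_of_nonneg_left h6 (sq_nonneg lam)
    calc |Real.exp (a - b) - 1 - (a - b)|
        ≤ 3 * (a - b) ^ 2 * Real.exp |a - b| := exp_ineq2 (a - b)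
      _ ≤ 3 * (a - b) ^ 2 * Real.exp (2 * R) :=
          mul_le_mul_of_nonneg_left (Real.exp_le_exp.mpr habs_ab) (by positivity)
      _ ≤ 3 * (lam ^ 2 * (|v e - w e| * (|v e| + |w e|))) * Real.exp (2 * R) :=
          mul_le_mul_of_nonneg_right (by linarith) (Real.exp_pos _).le
  rw [hdiff, abs_div, abs_of_pos hlam, div_le_iff₀ hlam]
  have htri : |Real.exp a - Real.exp b - (a - b)|
      ≤ |Real.exp b - 1| * |Real.exp (a - b) - 1| + |Real.exp (a - b) - 1 - (a - b)| := by
    rw [hsplit]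
    calc |(Real.exp b - 1) * (Real.exp (a - b) - 1) + (Real.exp (a - b) - 1 - (a - b))|
        ≤ |(Real.exp b - 1) * (Real.exp (a - b) - 1)| + |Real.exp (a - b) - 1 - (a - b)| :=
          abs_add_le _ _
      _ = _ := by rw [abs_mul]
  have hprod : |Real.exp b - 1| * |Real.exp (a - b) - 1|
      ≤ ((lam * (|w e| + |p * η e|)) * Real.exp R) * ((lam * |v e - w e|) * Real.exp (2 * R)) :=
    mul_le_mul h1 h2 (abs_nonneg _) (by positivity)
  have hEmul : Real.exp R * Real.exp (2 * R) = Real.exp (3 * R) := by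
    rw [← Real.exp_add]; ring_nf
  have key1 : ((lam * (|w e| + |p * η e|)) * Real.exp R) * ((lam * |v e - w e|) * Real.exp (2 * R))
      = lam ^ 2 * Real.exp (3 * R) * (|v e - w e| * (|w e| + |p * η e|)) := by
    rw [← hEmul]; ring
  have hE2 : Real.exp (2 * R) ≤ Real.exp (3 * R) := Real.exp_le_exp.mpr (by linarith)
  have key2 : 3 * (lam ^ 2 * (|v e - w e| * (|v e| + |w e|))) * Real.exp (2 * R)
      ≤ lam ^ 2 * Real.exp (3 * R) * (3 * (|v e - w e| * (|v e| + |w e|))) := by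
    have := mul_le_mul_of_nonneg_left hE2
      (by positivity : (0:ℝ) ≤ 3 * (lam ^ 2 * (|v e - w e| * (|v e| + |w e|))))
    calc 3 * (lam ^ 2 * (|v e - w e| * (|v e| + |w e|))) * Real.exp (2 * R)
        ≤ 3 * (lam ^ 2 * (|v e - w e| * (|v e| + |w e|))) * Real.exp (3 * R) := this
      _ = lam ^ 2 * Real.exp (3 * R) * (3 * (|v e - w e| * (|v e| + |w e|))) := by ring
  have hsum : |v e - w e| * (|w e| + |p * η e|) + 3 * (|v e - w e| * (|v e| + |w e|))
      ≤ |v e - w e| * (4 * (|v e| + |w e|) + |p * η e|) := by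
    have h7 : |v e - w e| * ((|w e| + |p * η e|) + 3 * (|v e| + |w e|))
        ≤ |v e - w e| * (4 * (|v e| + |w e|) + |p * η e|) :=
      mul_le_mul_of_nonneg_left (by linarith [abs_nonneg (v e), abs_nonneg (w e)]) (abs_nonneg _)
    calc |v e - w e| * (|w e| + |p * η e|) + 3 * (|v e - w e| * (|v e| + |w e|))
        = |v e - w e| * ((|w e| + |p * η e|) + 3 * (|v e| + |w e|)) := by ring
      _ ≤ _ := h7
  calc |Real.exp a - Real.exp b - (a - b)|
      ≤ |Real.exp b - 1| * |Real.exp (a - b) - 1| + |Real.exp (a - b) - 1 - (a - b)| := htri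
    _ ≤ lam ^ 2 * Real.exp (3 * R) * (|v e - w e| * (|w e| + |p * η e|))
        + lam ^ 2 * Real.exp (3 * R) * (3 * (|v e - w e| * (|v e| + |w e|))) := by
        rw [← key1]; linarith
    _ = lam ^ 2 * Real.exp (3 * R) * (|v e - w e| * (|w e| + |p * η e|)
        + 3 * (|v e - w e| * (|v e| + |w e|))) := by ring
    _ ≤ lam ^ 2 * Real.exp (3 * R) * (|v e - w e| * (4 * (|v e| + |w e|) + |p * η e|)) :=
        mul_le_mul_of_nonneg_left hsum (by positivity)
    _ = lam * Real.exp (3 * R) * (|v e - w e| * (4 * (|v e| + |w e|) + |p * η e|)) * lam := by ring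

end


end AuxiliaryLemmas


/-- **Continuity of the driver in the jump variable**: if `u` is bounded Borel and
square-`ν`-integrable, and `(u_n)` are Borel, square-`ν`-integrable, uniformly bounded and
converge to `u` in `L²(ν)`, then `f(z, u_n) → f(z, u)` for every `z`. -/
theorem driver_continuous_in_u
    (ν : Measure ℝ) [SigmaFinite ν]
    (hν0 : ν {0} = 0)
    (hν2 : (∫⁻ e, ENNReal.ofReal (min 1 (e ^ 2)) ∂ν) < ⊤)
    (η γ : ℝ → ℝ) (hηmeas : Measurable η) (hγmeas : Measurable γ)
    (C₀ : ℝ) (hC₀ : 0 < C₀)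
    (hηb : ∀ e, |η e| ≤ C₀ * min 1 |e|)
    (hγb : ∀ e, |γ e| ≤ C₀ * min 1 |e|)
    (hηint : Integrable η ν)
    (μ : Measure ℝ)
    (hμ : ∀ B : Set ℝ, MeasurableSet B → μ B = ν (γ ⁻¹' (B \ {0})))
    (K : ℝ → Measure ℝ) (hKmeas : Measurable K)
    (hKprob : ∀ᵐ g ∂μ.restrict ({0}ᶜ : Set ℝ),
      K g Set.univ = 1 ∧ K g {e | γ e = g} = 1)
    (hdis : ∀ B : Set ℝ, MeasurableSet B →
      ν (B ∩ {e | γ e ≠ 0}) = ∫⁻ g in ({0}ᶜ : Set ℝ), K g B ∂μ)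
    (lam sig pil pib : ℝ) (hlam : 0 < lam) (hsig : 0 < sig)
    (hpil : 0 < pil) (hpib : 0 < pib)
    (κ : ℝ) (Cke : ℝ) (hCke : Cke = (κ - ∫ e, η e ∂ν) / (lam * sig))
    (u : ℝ → ℝ) (humeas : Measurable u) (hub : ∃ M : ℝ, ∀ e, |u e| ≤ M)
    (hu2 : Integrable (fun e => (u e) ^ 2) ν)
    (un : ℕ → ℝ → ℝ) (hunmeas : ∀ n, Measurable (un n))
    (hun2 : ∀ n, Integrable (fun e => (un n e) ^ 2) ν)
    (hunb : ∃ M : ℝ, ∀ n e, |un n e| ≤ M)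
    (hconv : Filter.Tendsto (fun n => ∫ e, (un n e - u e) ^ 2 ∂ν)
      Filter.atTop (nhds 0)) :
    ∀ z : ℝ,
      Filter.Tendsto (fun n => fdrv ν μ η γ K lam sig Cke pil pib z (un n))
        Filter.atTop (nhds (fdrv ν μ η γ K lam sig Cke pil pib z u)) := by
  intro z
  classical
  obtain ⟨M₁, hM₁⟩ := hub
  obtain ⟨M₂, hM₂⟩ := hunb
  set M : ℝ := |M₁| + |M₂| with hMdef
  have hMu : ∀ e, |u e| ≤ M := fun e =>
    (hM₁ e).trans (by rw [hMdef]; nlinarith [le_abs_self M₁, abs_nonneg M₂])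
  have hMun : ∀ n e, |un n e| ≤ M := fun n e =>
    (hM₂ n e).trans (by rw [hMdef]; nlinarith [le_abs_self M₂, abs_nonneg M₁])
  have hM0 : 0 ≤ M := le_trans (abs_nonneg (u 0)) (hMu 0)
  set π : ℝ := max pil pib with hπdef
  have hπ0 : 0 < π := lt_of_lt_of_le hpil (le_max_left _ _)
  have hple : -pil ≤ pib := by linarith
  haveI hNE : Nonempty (Set.Icc (-pil) pib) := (Set.nonempty_Icc.2 hple).to_subtype
  have hp_abs : ∀ p : Set.Icc (-pil) pib, |(p : ℝ)| ≤ π := by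
    rintro ⟨p, hp1, hp2⟩
    rw [abs_le]
    constructor
    · simp only; nlinarith [le_max_left pil pib]
    · simp only; exact hp2.trans (le_max_right _ _)
  have hηC : ∀ e, |η e| ≤ C₀ := fun e =>
    (hηb e).trans (by nlinarith [min_le_left 1 |e|])
  set R : ℝ := lam * (M + π * C₀) with hRdef
  have harg : ∀ v : ℝ → ℝ, (∀ e, |v e| ≤ M) → ∀ p : ℝ, |p| ≤ π →
      ∀ e, |lam * (v e - p * η e)| ≤ R := by
    intro v hv p hp e
    rw [abs_mul, abs_of_pos hlam, hRdef]
    have h1 : |v e - p * η e| ≤ M + π * C₀ := by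
      have h2 : |p * η e| ≤ π * C₀ := by
        rw [abs_mul]
        apply mul_le_mul hp (hηC e) (abs_nonneg _) hπ0.le
      calc |v e - p * η e| ≤ |v e| + |p * η e| := abs_sub _ _
        _ ≤ M + π * C₀ := add_le_add (hv e) h2
    exact mul_le_mul_of_nonneg_left h1 hlam.le
  have hpη : ∀ p : ℝ, |p| ≤ π → ∀ e, |p * η e| ≤ π * |η e| := by
    intro p hp e
    rw [abs_mul]
    exact mul_le_mul_of_nonneg_right hp (abs_nonneg _)
  -- measurability of phiF
  have hphim : ∀ v : ℝ → ℝ, Measurable v → ∀ p : ℝ, Measurable (phiF lam η v p) := by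
    intro v hv p
    unfold phiF
    exact (((Real.measurable_exp.comp
      (measurable_const.mul (hv.sub (measurable_const.mul hηmeas)))).sub
        measurable_const).div_const lam).sub hv
  -- integrability facts
  have hmin_int : Integrable (fun e => min 1 (e ^ 2)) ν := by
    constructor
    · exact (measurable_const.min (measurable_id.pow_const 2)).aestronglyMeasurable
    · rw [hasFiniteIntegral_iff_norm]
      calc ∫⁻ e, ENNReal.ofReal ‖min 1 (e ^ 2)‖ ∂ν
          = ∫⁻ e, ENNReal.ofReal (min 1 (e ^ 2)) ∂ν := by
            apply lintegral_congr
            intro e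
            rw [Real.norm_eq_abs, abs_of_nonneg (le_min zero_le_one (sq_nonneg e))]
        _ < ⊤ := hν2
  have hη2 : Integrable (fun e => (η e) ^ 2) ν := by
    apply Integrable.mono' (hmin_int.const_mul (C₀ ^ 2))
      ((hηmeas.pow_const 2).aestronglyMeasurable)
    apply ae_of_all
    intro e
    rw [Real.norm_eq_abs, abs_of_nonneg (sq_nonneg _)]
    have h1 := hηb e
    have h2 : (η e) ^ 2 ≤ (C₀ * min 1 |e|) ^ 2 := by
      rw [← sq_abs (η e)]
      apply sq_le_sq' (by linarith [abs_nonneg (η e)]) h1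
    have h3 : (min 1 |e|) ^ 2 = min 1 (e ^ 2) := by
      rcases le_total (1:ℝ) |e| with h | h
      · rw [min_eq_left h, min_eq_left (by nlinarith [sq_abs e] : (1:ℝ) ≤ e ^ 2)]
        exact one_pow 2
      · rw [min_eq_right h, min_eq_right (by nlinarith [sq_abs e, abs_nonneg e] : e ^ 2 ≤ 1),
          sq_abs]
    calc (η e) ^ 2 ≤ (C₀ * min 1 |e|) ^ 2 := h2
      _ = C₀ ^ 2 * (min 1 |e|) ^ 2 := by ring
      _ = C₀ ^ 2 * min 1 (e ^ 2) := by rw [h3]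
  have habsη : Integrable (fun e => |η e|) ν := hηint.abs
  -- the quadratic dominating function
  set W : (ℝ → ℝ) → ℝ → ℝ :=
    fun v e => 6 * lam * Real.exp R * ((v e) ^ 2 + π ^ 2 * (η e) ^ 2) + π * |η e| with hWdef
  have hphiW : ∀ v : ℝ → ℝ, (∀ e, |v e| ≤ M) → ∀ p : ℝ, |p| ≤ π →
      ∀ e, |phiF lam η v p e| ≤ W v e := by
    intro v hv p hp e
    have h1 := phiF_quad (η := η) (v := v) (p := p) (e := e) hlam (harg v hv p hp e)
    have h2 : (p * η e) ^ 2 ≤ π ^ 2 * (η e) ^ 2 := by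
      have := hpη p hp e
      nlinarith [abs_nonneg (p * η e), sq_abs (p * η e), sq_abs (η e), abs_nonneg (η e)]
    have h3 := hpη p hp e
    have h4 : (0:ℝ) < 6 * lam * Real.exp R := by positivity
    rw [hWdef]
    simp only
    nlinarith
  have hW_int : ∀ v : ℝ → ℝ, Measurable v → Integrable (fun e => (v e) ^ 2) ν →
      Integrable (W v) ν := by
    intro v hv hv2
    apply Integrable.add
    · exact ((hv2.add (hη2.const_mul (π ^ 2))).const_mul (6 * lam * Real.exp R))
    · exact habsη.const_mul π
  have hphii : ∀ v : ℝ → ℝ, Measurable v → (∀ e, |v e| ≤ M) →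
      Integrable (fun e => (v e) ^ 2) ν → ∀ p : ℝ, |p| ≤ π →
      Integrable (phiF lam η v p) ν := by
    intro v hv hvb hv2 p hp
    apply Integrable.mono' (hW_int v hv hv2) (hphim v hv p).aestronglyMeasurable
    exact ae_of_all _ fun e => by rw [Real.norm_eq_abs]; exact hphiW v hvb p hp e
  -- the difference bound function and its integral
  set c2 : ℝ := lam * Real.exp (3 * R) * (4 + π) with hc2def
  have hc2pos : 0 < c2 := by positivity
  set dfn : ℕ → ℝ → ℝ :=
    fun n e => c2 * (|un n e - u e| * (|un n e| + |u e| + |η e|)) with hdfndef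
  have hdfn_nonneg : ∀ n e, 0 ≤ dfn n e := by
    intro n e
    rw [hdfndef]
    have := abs_nonneg (un n e - u e)
    have := abs_nonneg (un n e)
    have := abs_nonneg (u e)
    have := abs_nonneg (η e)
    positivity
  have hdfn_meas : ∀ n, Measurable (dfn n) := by
    intro n
    rw [hdfndef]
    exact (((((hunmeas n).sub humeas).abs).mul
      (((hunmeas n).abs.add humeas.abs).add hηmeas.abs)).const_mul c2)
  have hsub2_int : ∀ n, Integrable (fun e => (un n e - u e) ^ 2) ν := by
    intro n
    apply Integrable.mono' (((hun2 n).add hu2).const_mul 2)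
      (((hunmeas n).sub humeas).pow_const 2).aestronglyMeasurable
    apply ae_of_all
    intro e
    rw [Real.norm_eq_abs, abs_of_nonneg (sq_nonneg _)]
    simp only [Pi.add_apply, Pi.sub_apply]
    nlinarith [sq_nonneg (un n e + u e)]
  have hsum2_int : ∀ n, Integrable (fun e => (|un n e| + |u e| + |η e|) ^ 2) ν := by
    intro n
    apply Integrable.mono' ((((hun2 n).add hu2).add hη2).const_mul 3)
      ((((hunmeas n).abs.add humeas.abs).add hηmeas.abs).pow_const 2).aestronglyMeasurable
    apply ae_of_all
    intro e
    rw [Real.norm_eq_abs, abs_of_nonneg (sq_nonneg _)]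
    simp only [Pi.add_apply]
    nlinarith [sq_nonneg (|un n e| - |u e|), sq_nonneg (|un n e| - |η e|),
      sq_nonneg (|u e| - |η e|), sq_abs (un n e), sq_abs (u e), sq_abs (η e)]
  have hdfn_int : ∀ n, Integrable (dfn n) ν := by
    intro n
    apply Integrable.mono' (((hsub2_int n).add (hsum2_int n)).const_mul (c2 / 2))
      (hdfn_meas n).aestronglyMeasurable
    apply ae_of_all
    intro e
    rw [Real.norm_eq_abs, abs_of_nonneg (hdfn_nonneg n e), hdfndef]
    have h1 : |un n e - u e| * (|un n e| + |u e| + |η e|)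
        ≤ ((un n e - u e) ^ 2 + (|un n e| + |u e| + |η e|) ^ 2) / 2 := by
      nlinarith [sq_nonneg (|un n e - u e| - (|un n e| + |u e| + |η e|)), sq_abs (un n e - u e)]
    simp only [Pi.add_apply]
    calc c2 * (|un n e - u e| * (|un n e| + |u e| + |η e|))
        ≤ c2 * (((un n e - u e) ^ 2 + (|un n e| + |u e| + |η e|) ^ 2) / 2) :=
          mul_le_mul_of_nonneg_left h1 hc2pos.le
      _ = c2 / 2 * ((un n e - u e) ^ 2 + (|un n e| + |u e| + |η e|) ^ 2) := by ring
  have hphid : ∀ n, ∀ p : ℝ, |p| ≤ π →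
      ∀ e, |phiF lam η (un n) p e - phiF lam η u p e| ≤ dfn n e := by
    intro n p hp e
    have h1 := phiF_diff (η := η) (v := un n) (w := u) (p := p) (e := e) hlam
      (harg (un n) (hMun n) p hp e) (harg u hMu p hp e)
    have h2 : 4 * (|un n e| + |u e|) + |p * η e|
        ≤ (4 + π) * (|un n e| + |u e| + |η e|) := by
      have h3 := hpη p hp e
      nlinarith [abs_nonneg (un n e), abs_nonneg (u e), abs_nonneg (η e)]
    have h4 : lam * Real.exp (3 * R) * (|un n e - u e| * (4 * (|un n e| + |u e|) + |p * η e|))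
        ≤ dfn n e := by
      rw [hdfndef, hc2def]
      simp only
      have h5 : |un n e - u e| * (4 * (|un n e| + |u e|) + |p * η e|)
          ≤ |un n e - u e| * ((4 + π) * (|un n e| + |u e| + |η e|)) :=
        mul_le_mul_of_nonneg_left h2 (abs_nonneg _)
      calc lam * Real.exp (3 * R) * (|un n e - u e| * (4 * (|un n e| + |u e|) + |p * η e|))
          ≤ lam * Real.exp (3 * R) * (|un n e - u e| * ((4 + π) * (|un n e| + |u e| + |η e|))) :=
            mul_le_mul_of_nonneg_left h5 (by positivity)
        _ = lam * Real.exp (3 * R) * (4 + π) * (|un n e - u e| * (|un n e| + |u e| + |η e|)) := by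
            ring
    exact h1.trans h4
  set T : ℕ → ℝ := fun n => ∫ e, dfn n e ∂ν with hTdef
  have hT_nonneg : ∀ n, 0 ≤ T n := fun n => integral_nonneg (hdfn_nonneg n)
  have hT_tendsto : Filter.Tendsto T Filter.atTop (nhds 0) := by
    set δ : ℕ → ℝ := fun n => ∫ e, (un n e - u e) ^ 2 ∂ν with hδdef
    have hδ0 : ∀ n, 0 ≤ δ n := fun n => integral_nonneg fun e => sq_nonneg _
    set A : ℝ := ∫ e, (u e) ^ 2 ∂ν with hAdef
    set E : ℝ := ∫ e, (η e) ^ 2 ∂ν with hEdef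
    have hA0 : 0 ≤ A := integral_nonneg fun e => sq_nonneg _
    have hE0 : 0 ≤ E := integral_nonneg fun e => sq_nonneg _
    set C3 : ℝ := 9 * A + 3 * E with hC3def
    have hun2le : ∀ n, ∫ e, (un n e) ^ 2 ∂ν ≤ 2 * δ n + 2 * A := by
      intro n
      have i1 : Integrable (fun e => 2 * (un n e - u e) ^ 2 + 2 * (u e) ^ 2) ν :=
        ((hsub2_int n).const_mul 2).add (hu2.const_mul 2)
      have i1a : Integrable (fun e => 2 * (un n e - u e) ^ 2) ν := (hsub2_int n).const_mul 2
      have i1b : Integrable (fun e => 2 * (u e) ^ 2) ν := hu2.const_mul 2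
      calc ∫ e, (un n e) ^ 2 ∂ν
          ≤ ∫ e, (2 * (un n e - u e) ^ 2 + 2 * (u e) ^ 2) ∂ν := by
            apply integral_mono (hun2 n) i1
            intro e
            simp only [Pi.add_apply]
            nlinarith [sq_nonneg (un n e - 2 * u e)]
        _ = 2 * δ n + 2 * A := by
            rw [integral_add i1a i1b, integral_const_mul, integral_const_mul]
    have hS : ∀ n, ∫ e, (|un n e| + |u e| + |η e|) ^ 2 ∂ν ≤ 6 * δ n + C3 := by
      intro n
      have i2a : Integrable (fun e => 3 * (un n e) ^ 2) ν := (hun2 n).const_mul 3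
      have i2b : Integrable (fun e => 3 * (u e) ^ 2 + 3 * (η e) ^ 2) ν :=
        (hu2.const_mul 3).add (hη2.const_mul 3)
      have i2c : Integrable (fun e => 3 * (u e) ^ 2) ν := hu2.const_mul 3
      have i2d : Integrable (fun e => 3 * (η e) ^ 2) ν := hη2.const_mul 3
      have i2 : Integrable (fun e => 3 * (un n e) ^ 2 + (3 * (u e) ^ 2 + 3 * (η e) ^ 2)) ν :=
        i2a.add i2b
      calc ∫ e, (|un n e| + |u e| + |η e|) ^ 2 ∂ν
          ≤ ∫ e, (3 * (un n e) ^ 2 + (3 * (u e) ^ 2 + 3 * (η e) ^ 2)) ∂ν := by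
            apply integral_mono (hsum2_int n) i2
            intro e
            simp only [Pi.add_apply]
            nlinarith [sq_nonneg (|un n e| - |u e|), sq_nonneg (|un n e| - |η e|),
              sq_nonneg (|u e| - |η e|), sq_abs (un n e), sq_abs (u e), sq_abs (η e)]
        _ = 3 * ∫ e, (un n e) ^ 2 ∂ν + (3 * A + 3 * E) := by
            rw [integral_add i2a i2b, integral_add i2c i2d,
              integral_const_mul, integral_const_mul, integral_const_mul]
        _ ≤ 3 * (2 * δ n + 2 * A) + (3 * A + 3 * E) := by
            have := hun2le n
            linarith
        _ = 6 * δ n + C3 := by rw [hC3def]; ring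
    have hCS : ∀ n, T n ≤ c2 * (Real.sqrt (δ n) * Real.sqrt (6 * δ n + C3)) := by
      intro n
      have hpq : Real.HolderConjugate 2 2 := ⟨by norm_num, by norm_num, by norm_num⟩
      have hfm : AEStronglyMeasurable (fun e => |un n e - u e|) ν :=
        ((hunmeas n).sub humeas).abs.aestronglyMeasurable
      have hgm : AEStronglyMeasurable (fun e => |un n e| + |u e| + |η e|) ν :=
        (((hunmeas n).abs.add humeas.abs).add hηmeas.abs).aestronglyMeasurable
      have hof2 : (ENNReal.ofReal (2:ℝ)) = 2 := by
        rw [ENNReal.ofReal_ofNat]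
      have hf2 : MemLp (fun e => |un n e - u e|) (ENNReal.ofReal (2:ℝ)) ν := by
        rw [hof2, memLp_two_iff_integrable_sq hfm]
        apply (hsub2_int n).congr
        exact ae_of_all _ fun e => by simp [sq_abs]
      have hg2 : MemLp (fun e => |un n e| + |u e| + |η e|) (ENNReal.ofReal (2:ℝ)) ν := by
        rw [hof2, memLp_two_iff_integrable_sq hgm]
        exact hsum2_int n
      have h := integral_mul_le_Lp_mul_Lq_of_nonneg hpq
        (ae_of_all _ fun e => abs_nonneg (un n e - u e))
        (ae_of_all _ fun e => by positivity) hf2 hg2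
      have e1 : ∫ e, |un n e - u e| ^ (2:ℝ) ∂ν = δ n := by
        rw [hδdef]
        apply integral_congr_ae
        exact ae_of_all _ fun e => by simp [Real.rpow_two, sq_abs]
      have e2 : ∫ e, (|un n e| + |u e| + |η e|) ^ (2:ℝ) ∂ν
          = ∫ e, (|un n e| + |u e| + |η e|) ^ 2 ∂ν := by
        apply integral_congr_ae
        exact ae_of_all _ fun e => by simp [Real.rpow_two]
      rw [e1, e2, ← Real.sqrt_eq_rpow, ← Real.sqrt_eq_rpow] at h
      have e3 : T n = c2 * ∫ e, |un n e - u e| * (|un n e| + |u e| + |η e|) ∂ν := by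
        rw [hTdef]
        simp only [hdfndef]
        rw [integral_const_mul]
      rw [e3]
      have h4 : Real.sqrt (∫ e, (|un n e| + |u e| + |η e|) ^ 2 ∂ν)
          ≤ Real.sqrt (6 * δ n + C3) := Real.sqrt_le_sqrt (hS n)
      have h5 : (∫ e, |un n e - u e| * (|un n e| + |u e| + |η e|) ∂ν)
          ≤ Real.sqrt (δ n) * Real.sqrt (6 * δ n + C3) := by
        calc (∫ e, |un n e - u e| * (|un n e| + |u e| + |η e|) ∂ν)
            ≤ Real.sqrt (δ n) * Real.sqrt (∫ e, (|un n e| + |u e| + |η e|) ^ 2 ∂ν) := h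
          _ ≤ Real.sqrt (δ n) * Real.sqrt (6 * δ n + C3) :=
              mul_le_mul_of_nonneg_left h4 (Real.sqrt_nonneg _)
      exact mul_le_mul_of_nonneg_left h5 hc2pos.le
    have hb : Filter.Tendsto (fun n => c2 * (Real.sqrt (δ n) * Real.sqrt (6 * δ n + C3)))
        Filter.atTop (nhds 0) := by
      have h1 : Filter.Tendsto δ Filter.atTop (nhds 0) := hconv
      have h2 : Filter.Tendsto (fun n => Real.sqrt (δ n)) Filter.atTop (nhds (Real.sqrt 0)) :=
        (Real.continuous_sqrt.tendsto 0).comp h1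
      have h3 : Filter.Tendsto (fun n => 6 * δ n + C3) Filter.atTop (nhds (6 * 0 + C3)) :=
        (h1.const_mul 6).add_const C3
      have h4 : Filter.Tendsto (fun n => Real.sqrt (6 * δ n + C3)) Filter.atTop
          (nhds (Real.sqrt (6 * 0 + C3))) := (Real.continuous_sqrt.tendsto _).comp h3
      have h5 := (h2.mul h4).const_mul c2
      simpa using h5
    exact squeeze_zero hT_nonneg hCS hb
  -- Part 1: the f1d infimum
  have hγ0meas : MeasurableSet {e : ℝ | γ e = 0} := hγmeas (measurableSet_singleton 0)
  have hf1_lb : ∀ v : ℝ → ℝ, Measurable v → (∀ e, |v e| ≤ M) →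
      Integrable (fun e => (v e) ^ 2) ν →
      ∀ p : Set.Icc (-pil) pib,
        -(π * ∫ e, |η e| ∂ν) ≤ f1d ν η γ lam sig Cke z v p := by
    intro v hv hvb hv2 p
    have hq : 0 ≤ lam / 2 * (sig * (p : ℝ) - (z + Cke / lam)) ^ 2 := by positivity
    have hint : Integrable (phiF lam η v p) (ν.restrict {e | γ e = 0}) :=
      (hphii v hv hvb hv2 p (hp_abs p)).restrict
    have hlow : ∫ e in {e | γ e = 0}, (-(π * |η e|)) ∂ν
        ≤ ∫ e in {e | γ e = 0}, phiF lam η v p e ∂ν := by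
      apply integral_mono ((habsη.const_mul π).restrict.neg) hint
      intro e
      calc -(π * |η e|) ≤ -(|(p : ℝ) * η e|) := by
            have := hpη (p : ℝ) (hp_abs p) e; linarith
        _ ≤ phiF lam η v p e := phiF_lower hlam
    have hlow2 : -(π * ∫ e, |η e| ∂ν) ≤ ∫ e in {e | γ e = 0}, (-(π * |η e|)) ∂ν := by
      rw [integral_neg, integral_const_mul, neg_le_neg_iff]
      apply mul_le_mul_of_nonneg_left _ hπ0.le
      apply setIntegral_le_integral habsη (ae_of_all _ fun e => abs_nonneg _)
    show -(π * ∫ e, |η e| ∂ν) ≤ _ + _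
    have : ∫ e in {e | γ e = 0}, ((Real.exp (lam * (v e - (p:ℝ) * η e)) - 1) / lam - v e) ∂ν
        = ∫ e in {e | γ e = 0}, phiF lam η v p e ∂ν := rfl
    rw [this]
    linarith
  have hf1_bdd : ∀ v : ℝ → ℝ, Measurable v → (∀ e, |v e| ≤ M) →
      Integrable (fun e => (v e) ^ 2) ν →
      BddBelow (Set.range fun p : Set.Icc (-pil) pib => f1d ν η γ lam sig Cke z v p) := by
    intro v hv hvb hv2
    refine ⟨-(π * ∫ e, |η e| ∂ν), ?_⟩
    rintro x ⟨p, rfl⟩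
    exact hf1_lb v hv hvb hv2 p
  have hF1 : ∀ n, |(⨅ p : Set.Icc (-pil) pib, f1d ν η γ lam sig Cke z (un n) p)
      - ⨅ p : Set.Icc (-pil) pib, f1d ν η γ lam sig Cke z u p| ≤ T n := by
    intro n
    apply abs_ciInf_sub_ciInf (hf1_bdd (un n) (hunmeas n) (hMun n) (hun2 n))
      (hf1_bdd u humeas hMu hu2)
    intro p
    have hd : f1d ν η γ lam sig Cke z (un n) p - f1d ν η γ lam sig Cke z u p
        = ∫ e in {e | γ e = 0}, (phiF lam η (un n) p e - phiF lam η u p e) ∂ν := by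
      unfold f1d
      rw [integral_sub ((hphii (un n) (hunmeas n) (hMun n) (hun2 n) p (hp_abs p)).restrict)
        ((hphii u humeas hMu hu2 p (hp_abs p)).restrict)]
      simp only [phiF]
      ring
    rw [hd]
    calc |∫ e in {e | γ e = 0}, (phiF lam η (un n) p e - phiF lam η u p e) ∂ν|
        ≤ ∫ e in {e | γ e = 0}, |phiF lam η (un n) p e - phiF lam η u p e| ∂ν := by
          rw [← Real.norm_eq_abs]
          refine (norm_integral_le_integral_norm _).trans ?_
          apply le_of_eq
          apply integral_congr_ae
          exact ae_of_all _ fun e => Real.norm_eq_abs _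
      _ ≤ ∫ e in {e | γ e = 0}, dfn n e ∂ν := by
          apply integral_mono
            (((hphii (un n) (hunmeas n) (hMun n) (hun2 n) p (hp_abs p)).restrict.sub
              ((hphii u humeas hMu hu2 p (hp_abs p)).restrict)).abs)
            (hdfn_int n).restrict
          exact fun e => hphid n p (hp_abs p) e
      _ ≤ T n := setIntegral_le_integral (hdfn_int n) (ae_of_all _ (hdfn_nonneg n))
  -- ===================== Part 2: the kernel term =====================
  set m : Measure ℝ := μ.restrict ({0}ᶜ : Set ℝ) with hmdef
  set P : ℝ → Measure ℝ := fun g => if K g Set.univ = 1 then K g else Measure.dirac 0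
    with hPdef
  have hsetK : MeasurableSet {g : ℝ | K g Set.univ = 1} :=
    ((Measure.measurable_coe MeasurableSet.univ).comp hKmeas) (measurableSet_singleton 1)
  have hPmeas : Measurable P := Measurable.ite hsetK hKmeas measurable_const
  have hPprob : ∀ g, IsProbabilityMeasure (P g) := by
    intro g
    rw [hPdef]
    simp only
    split_ifs with h
    · exact ⟨h⟩
    · infer_instance
  set κker : ProbabilityTheory.Kernel ℝ ℝ := ⟨P, hPmeas⟩ with hκdef
  haveI : ProbabilityTheory.IsMarkovKernel κker := ⟨fun g => hPprob g⟩
  have haeKP : ∀ᵐ g ∂m, K g = P g ∧ P g {e | γ e = g} = 1 := by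
    filter_upwards [hKprob] with g hg
    have h1 : P g = K g := by rw [hPdef]; simp only; rw [if_pos hg.1]
    exact ⟨h1.symm, by rw [h1]; exact hg.2⟩
  have hγ0c : MeasurableSet {e : ℝ | γ e ≠ 0} := (hγmeas (measurableSet_singleton 0)).compl
  have hbindK : Measure.bind m K = ν.restrict {e | γ e ≠ 0} := by
    ext B hB
    rw [Measure.bind_apply hB hKmeas.aemeasurable, Measure.restrict_apply hB, hdis B hB]
  have hlint : ∀ f : ℝ → ℝ≥0∞, Measurable f →
      ∫⁻ g, (∫⁻ e, f e ∂(P g)) ∂m = ∫⁻ e in {e | γ e ≠ 0}, f e ∂ν := by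
    intro f hf
    rw [← hbindK, Measure.lintegral_bind hKmeas.aemeasurable hf.aemeasurable]
    apply lintegral_congr_ae
    filter_upwards [haeKP] with g hg
    rw [hg.1]
  -- the integrand as an indicator function
  set ψ : (ℝ → ℝ) → ℝ → ℝ → ℝ → ℝ :=
    fun v p g e => Set.indicator {q : ℝ × ℝ | γ q.2 = q.1} (fun q => phiF lam η v p q.2) (g, e)
    with hψdef
  have hSmeas : MeasurableSet {q : ℝ × ℝ | γ q.2 = q.1} :=
    measurableSet_eq_fun (hγmeas.comp measurable_snd) measurable_fst
  have hψeq : ∀ (v : ℝ → ℝ) (p g : ℝ),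
      (fun e => ψ v p g e) = Set.indicator {e : ℝ | γ e = g} (phiF lam η v p) := by
    intro v p g
    funext e
    rw [hψdef]
    simp only [Set.indicator, Set.mem_setOf_eq]
  have hψeq' : ∀ (v : ℝ → ℝ) (p g : ℝ),
      ψ v p g = Set.indicator {e : ℝ | γ e = g} (phiF lam η v p) := by
    intro v p g
    funext e
    rw [hψdef]
    simp only [Set.indicator, Set.mem_setOf_eq]
  have hψmeas : ∀ (v : ℝ → ℝ), Measurable v → ∀ p : ℝ,
      StronglyMeasurable (fun q : ℝ × ℝ => ψ v p q.1 q.2) := by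
    intro v hv p
    have h1 : (fun q : ℝ × ℝ => ψ v p q.1 q.2)
        = Set.indicator {q : ℝ × ℝ | γ q.2 = q.1} (fun q => phiF lam η v p q.2) := by
      funext q
      rw [hψdef]
    rw [h1]
    exact (((hphim v hv p).comp measurable_snd).indicator hSmeas).stronglyMeasurable
  have hψabs : ∀ (v : ℝ → ℝ) (p g e : ℝ), |ψ v p g e| ≤ |phiF lam η v p e| := by
    intro v p g e
    rw [hψdef]
    simp only [Set.indicator]
    split_ifs
    · exact le_refl _
    · simp [abs_nonneg]
  have hψdiff : ∀ (v w : ℝ → ℝ) (p g e : ℝ),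
      |ψ v p g e - ψ w p g e| ≤ |phiF lam η v p e - phiF lam η w p e| := by
    intro v w p g e
    rw [hψdef]
    simp only [Set.indicator]
    split_ifs
    · exact le_refl _
    · simp [abs_nonneg]
  set Φ : (ℝ → ℝ) → ℝ → ℝ → ℝ := fun v p g => ∫ e, ψ v p g e ∂(P g) with hΦdef
  have hΦmeas : ∀ (v : ℝ → ℝ), Measurable v → ∀ p : ℝ, Measurable (fun g => Φ v p g) := by
    intro v hv p
    have h := MeasureTheory.StronglyMeasurable.integral_kernel_prod_right (κ := κker)
      (f := fun g e => ψ v p g e) (hψmeas v hv p)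
    exact h.measurable
  -- constant bound
  set CB : ℝ := (Real.exp R + 1) / lam + M with hCBdef
  have hψbd : ∀ (v : ℝ → ℝ), (∀ e, |v e| ≤ M) → ∀ p : ℝ, |p| ≤ π → ∀ g e : ℝ,
      |ψ v p g e| ≤ CB := by
    intro v hvb p hp g e
    exact (hψabs v p g e).trans (phiF_abs_le hlam (harg v hvb p hp e) (hvb e))
  have hΦbd : ∀ (v : ℝ → ℝ), (∀ e, |v e| ≤ M) → ∀ p : ℝ, |p| ≤ π → ∀ g : ℝ,
      |Φ v p g| ≤ CB := by
    intro v hvb p hp g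
    haveI := hPprob g
    rw [hΦdef]
    simp only
    rw [← Real.norm_eq_abs]
    have h := norm_integral_le_of_norm_le_const (μ := P g)
      (f := fun e => ψ v p g e) (C := CB)
      (ae_of_all _ fun e => by rw [Real.norm_eq_abs]; exact hψbd v hvb p hp g e)
    simpa using h
  -- continuity in p
  have hΦcont : ∀ (v : ℝ → ℝ), Measurable v → (∀ e, |v e| ≤ M) → ∀ g : ℝ,
      Continuous (fun p => Φ v p g) := by
    intro v hv hvb g
    rw [continuous_iff_continuousAt]
    intro p₀
    set π' : ℝ := |p₀| + 1 with hπ'def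
    have hπ'0 : 0 ≤ π' := by positivity
    haveI := hPprob g
    apply continuousAt_of_dominated (bound := fun _ => (Real.exp (lam * (M + π' * C₀)) + 1) / lam + M)
    · apply Filter.Eventually.of_forall
      intro p
      show AEStronglyMeasurable (fun e => ψ v p g e) (P g)
      rw [hψeq v p g]
      exact ((hphim v hv p).indicator (hγmeas (measurableSet_singleton g))).aestronglyMeasurable
    · filter_upwards [Metric.ball_mem_nhds p₀ one_pos] with p hp
      apply ae_of_all
      intro e
      rw [Real.norm_eq_abs]
      have hpb : |p| ≤ π' := by
        rw [hπ'def]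
        have := abs_sub_abs_le_abs_sub p p₀
        have h2 : |p - p₀| < 1 := by simpa [Real.dist_eq] using hp
        linarith
      have hargp : |lam * (v e - p * η e)| ≤ lam * (M + π' * C₀) := by
        rw [abs_mul, abs_of_pos hlam]
        have h2 : |p * η e| ≤ π' * C₀ := by
          rw [abs_mul]
          apply mul_le_mul hpb (hηC e) (abs_nonneg _) hπ'0
        have h3 : |v e - p * η e| ≤ M + π' * C₀ :=
          (abs_sub _ _).trans (add_le_add (hvb e) h2)
        exact mul_le_mul_of_nonneg_left h3 hlam.le
      exact (hψabs v p g e).trans (phiF_abs_le hlam hargp (hvb e))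
    · exact integrable_const _
    · apply ae_of_all
      intro e
      have h1 : (fun p => ψ v p g e)
          = fun p => if γ e = g then phiF lam η v p e else 0 := by
        funext p
        rw [hψdef]
        simp only [Set.indicator, Set.mem_setOf_eq]
      rw [h1]
      split_ifs with h
      · apply Continuous.continuousAt
        unfold phiF
        apply Continuous.sub ?_ continuous_const
        apply Continuous.div_const
        apply Continuous.sub ?_ continuous_const
        exact Real.continuous_exp.comp
          (continuous_const.mul (continuous_const.sub (continuous_id.mul continuous_const)))
      · exact continuousAt_const
  -- the infimum function
  set G' : (ℝ → ℝ) → ℝ → ℝ :=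
    fun v g => ⨅ p : Set.Icc (-pil) pib, Φ v (↑p) g with hG'def
  have hG'bddb : ∀ (v : ℝ → ℝ), (∀ e, |v e| ≤ M) → ∀ g : ℝ,
      BddBelow (Set.range fun p : Set.Icc (-pil) pib => Φ v (↑p) g) := by
    intro v hvb g
    refine ⟨-CB, ?_⟩
    rintro x ⟨p, rfl⟩
    have := (abs_le.1 (hΦbd v hvb (↑p) (hp_abs p) g)).1
    linarith
  have hG'bd : ∀ (v : ℝ → ℝ), (∀ e, |v e| ≤ M) → ∀ g : ℝ, |G' v g| ≤ CB := by
    intro v hvb g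
    haveI := hNE
    rw [hG'def]
    simp only
    rw [abs_le]
    obtain ⟨p₀⟩ := id hNE
    constructor
    · apply le_ciInf
      intro p
      have := (abs_le.1 (hΦbd v hvb (↑p) (hp_abs p) g)).1
      linarith
    · refine (ciInf_le (hG'bddb v hvb g) p₀).trans ?_
      exact (abs_le.1 (hΦbd v hvb (↑p₀) (hp_abs p₀) g)).2
  have hG'meas : ∀ (v : ℝ → ℝ), Measurable v → (∀ e, |v e| ≤ M) → Measurable (G' v) := by
    intro v hv hvb
    haveI := hNE
    have heq : G' v = fun g => ⨅ n : ℕ,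
        Φ v (↑(TopologicalSpace.denseSeq (Set.Icc (-pil) pib) n)) g := by
      funext g
      rw [hG'def]
      exact iInf_eq_iInf_denseSeq (hΦcont v hv hvb g) (hG'bddb v hvb g)
    rw [heq]
    exact Measurable.iInf fun n => hΦmeas v hv _
  -- a.e. equality with the statement's integrand
  have hG'ae : ∀ v : ℝ → ℝ,
      (fun g => ⨅ p : Set.Icc (-pil) pib, f2d η γ K lam g v (↑p)) =ᵐ[m] G' v := by
    intro v
    filter_upwards [haeKP] with g hg
    rw [hG'def]
    simp only
    apply iInf_congr
    intro p
    show f2d η γ K lam g v (↑p) = Φ v (↑p) g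
    have hms : MeasurableSet {e : ℝ | γ e = g} := hγmeas (measurableSet_singleton g)
    rw [hΦdef]
    simp only
    rw [hψeq v (↑p) g, integral_indicator hms, ← hg.1]
    rfl
  -- a.e. finiteness of kernel integrals of nonnegative ν-integrable functions
  have hfin1 : ∀ f : ℝ → ℝ, Measurable f → Integrable f ν → (∀ e, 0 ≤ f e) →
      ∀ᵐ g ∂m, (∫⁻ e, ENNReal.ofReal (f e) ∂(P g)) ≠ ⊤ := by
    intro f hf hfi hf0
    have hmeasf : Measurable fun e => ENNReal.ofReal (f e) := hf.ennreal_ofReal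
    have hmg : Measurable fun g => ∫⁻ e, ENNReal.ofReal (f e) ∂(P g) := by
      have h := Measurable.lintegral_kernel_prod_right (κ := κker)
        (f := fun _ e => ENNReal.ofReal (f e)) (hmeasf.comp measurable_snd)
      exact h
    have htot : (∫⁻ g, (∫⁻ e, ENNReal.ofReal (f e) ∂(P g)) ∂m) ≠ ⊤ := by
      rw [hlint _ hmeasf]
      have h1 : (∫⁻ e in {e | γ e ≠ 0}, ENNReal.ofReal (f e) ∂ν)
          ≤ ∫⁻ e, ENNReal.ofReal (f e) ∂ν :=
        lintegral_mono' Measure.restrict_le_self le_rfl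
      have h2 : (∫⁻ e, ENNReal.ofReal (f e) ∂ν) = ENNReal.ofReal (∫ e, f e ∂ν) :=
        (ofReal_integral_eq_lintegral_ofReal hfi (ae_of_all _ hf0)).symm
      exact ne_top_of_le_ne_top (by rw [h2]; exact ENNReal.ofReal_ne_top) h1
    filter_upwards [ae_lt_top hmg htot] with g hg
    exact hg.ne
  have hWnonneg : ∀ (v : ℝ → ℝ) (e : ℝ), 0 ≤ W v e := by
    intro v e
    rw [hWdef]
    have := abs_nonneg (η e)
    positivity
  have hW_meas : ∀ v : ℝ → ℝ, Measurable v → Measurable (W v) := by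
    intro v hv
    rw [hWdef]
    exact ((((hv.pow_const 2).add ((hηmeas.pow_const 2).const_mul (π ^ 2))).const_mul
      (6 * lam * Real.exp R)).add (hηmeas.abs.const_mul π))
  have hfinWu : ∀ᵐ g ∂m, (∫⁻ e, ENNReal.ofReal (W u e) ∂(P g)) ≠ ⊤ :=
    hfin1 (W u) (hW_meas u humeas) (hW_int u humeas hu2) (hWnonneg u)
  have hfinWn : ∀ᵐ g ∂m, ∀ n, (∫⁻ e, ENNReal.ofReal (W (un n) e) ∂(P g)) ≠ ⊤ :=
    ae_all_iff.2 fun n =>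
      hfin1 (W (un n)) (hW_meas (un n) (hunmeas n)) (hW_int (un n) (hunmeas n) (hun2 n))
        (hWnonneg (un n))
  have hfinD : ∀ᵐ g ∂m, ∀ n, (∫⁻ e, ENNReal.ofReal (dfn n e) ∂(P g)) ≠ ⊤ :=
    ae_all_iff.2 fun n => hfin1 (dfn n) (hdfn_meas n) (hdfn_int n) (hdfn_nonneg n)
  -- from lintegral finiteness to integrability w.r.t. P g
  have hPint : ∀ f : ℝ → ℝ, Measurable f → (∀ e, 0 ≤ f e) → ∀ g : ℝ,
      (∫⁻ e, ENNReal.ofReal (f e) ∂(P g)) ≠ ⊤ → Integrable f (P g) := by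
    intro f hf hf0 g hfin
    refine ⟨hf.aestronglyMeasurable, ?_⟩
    rw [hasFiniteIntegral_iff_ofReal (ae_of_all _ hf0)]
    exact hfin.lt_top
  -- ψ is integrable w.r.t. P g once W is
  have hψint : ∀ (v : ℝ → ℝ), Measurable v → (∀ e, |v e| ≤ M) → ∀ g : ℝ,
      Integrable (W v) (P g) → ∀ p : ℝ, |p| ≤ π →
      Integrable (fun e => ψ v p g e) (P g) := by
    intro v hv hvb g hWint p hp
    apply Integrable.mono' hWint
    · rw [hψeq v p g]
      exact ((hphim v hv p).indicator (hγmeas (measurableSet_singleton g))).aestronglyMeasurable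
    · apply ae_of_all
      intro e
      rw [Real.norm_eq_abs]
      exact (hψabs v p g e).trans (hphiW v hvb p hp e)
  -- |Φ| is bounded by the P g integral of W
  have hΦleH : ∀ (v : ℝ → ℝ), Measurable v → (∀ e, |v e| ≤ M) → ∀ g : ℝ,
      Integrable (W v) (P g) → ∀ p : ℝ, |p| ≤ π →
      |Φ v p g| ≤ ∫ e, W v e ∂(P g) := by
    intro v hv hvb g hWint p hp
    rw [hΦdef]
    simp only
    rw [← Real.norm_eq_abs]
    refine (norm_integral_le_integral_norm _).trans ?_
    apply integral_mono (hψint v hv hvb g hWint p hp).norm hWint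
    intro e
    simp only [Real.norm_eq_abs]
    exact (hψabs v p g e).trans (hphiW v hvb p hp e)
  have hG'leH : ∀ (v : ℝ → ℝ), Measurable v → (∀ e, |v e| ≤ M) → ∀ g : ℝ,
      Integrable (W v) (P g) → |G' v g| ≤ ∫ e, W v e ∂(P g) := by
    intro v hv hvb g hWint
    rw [hG'def]
    simp only
    rw [abs_le]
    obtain ⟨p₀⟩ := id hNE
    constructor
    · apply le_ciInf
      intro p
      have := (abs_le.1 (hΦleH v hv hvb g hWint (↑p) (hp_abs p))).1
      linarith
    · refine (ciInf_le (hG'bddb v hvb g) p₀).trans ?_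
      exact (abs_le.1 (hΦleH v hv hvb g hWint (↑p₀) (hp_abs p₀))).2
  -- integrability of G' over m
  have hG'int : ∀ (v : ℝ → ℝ), Measurable v → (∀ e, |v e| ≤ M) →
      Integrable (fun e => (v e) ^ 2) ν →
      (∀ᵐ g ∂m, (∫⁻ e, ENNReal.ofReal (W v e) ∂(P g)) ≠ ⊤) →
      Integrable (G' v) m := by
    intro v hv hvb hv2 hfin
    refine ⟨(hG'meas v hv hvb).aestronglyMeasurable, ?_⟩
    rw [hasFiniteIntegral_iff_norm]
    have hle : (∫⁻ g, ENNReal.ofReal ‖G' v g‖ ∂m)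
        ≤ ∫⁻ g, (∫⁻ e, ENNReal.ofReal (W v e) ∂(P g)) ∂m := by
      apply lintegral_mono_ae
      filter_upwards [hfin] with g hg
      have hWint : Integrable (W v) (P g) :=
        hPint (W v) (hW_meas v hv) (hWnonneg v) g hg
      have h1 : ‖G' v g‖ ≤ ∫ e, W v e ∂(P g) := by
        rw [Real.norm_eq_abs]
        exact hG'leH v hv hvb g hWint
      calc ENNReal.ofReal ‖G' v g‖ ≤ ENNReal.ofReal (∫ e, W v e ∂(P g)) :=
            ENNReal.ofReal_le_ofReal h1
        _ = ∫⁻ e, ENNReal.ofReal (W v e) ∂(P g) :=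
            ofReal_integral_eq_lintegral_ofReal hWint (ae_of_all _ (hWnonneg v))
    apply lt_of_le_of_lt hle
    rw [hlint _ (hW_meas v hv).ennreal_ofReal]
    have h1 : (∫⁻ e in {e | γ e ≠ 0}, ENNReal.ofReal (W v e) ∂ν)
        ≤ ∫⁻ e, ENNReal.ofReal (W v e) ∂ν :=
      lintegral_mono' Measure.restrict_le_self le_rfl
    have h2 : (∫⁻ e, ENNReal.ofReal (W v e) ∂ν) = ENNReal.ofReal (∫ e, W v e ∂ν) :=
      (ofReal_integral_eq_lintegral_ofReal (hW_int v hv hv2) (ae_of_all _ (hWnonneg v))).symm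
    exact lt_of_le_of_lt h1 (by rw [h2]; exact ENNReal.ofReal_lt_top)
  have hIun : ∀ n, Integrable (G' (un n)) m := by
    intro n
    apply hG'int (un n) (hunmeas n) (hMun n) (hun2 n)
    filter_upwards [hfinWn] with g hg
    exact hg n
  have hIu : Integrable (G' u) m :=
    hG'int u humeas hMu hu2 hfinWu
  -- the main estimate for the second part
  have hF2 : ∀ n,
      |(∫ g in ({0}ᶜ : Set ℝ), (⨅ p : Set.Icc (-pil) pib, f2d η γ K lam g (un n) (↑p)) ∂μ)
        - ∫ g in ({0}ᶜ : Set ℝ), (⨅ p : Set.Icc (-pil) pib, f2d η γ K lam g u (↑p)) ∂μ|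
        ≤ T n := by
    intro n
    have e1 : (∫ g in ({0}ᶜ : Set ℝ),
        (⨅ p : Set.Icc (-pil) pib, f2d η γ K lam g (un n) (↑p)) ∂μ)
        = ∫ g, G' (un n) g ∂m := integral_congr_ae (hG'ae (un n))
    have e2 : (∫ g in ({0}ᶜ : Set ℝ),
        (⨅ p : Set.Icc (-pil) pib, f2d η γ K lam g u (↑p)) ∂μ)
        = ∫ g, G' u g ∂m := integral_congr_ae (hG'ae u)
    rw [e1, e2, ← integral_sub (hIun n) hIu]
    -- pointwise a.e. bound on the difference of infima
    have hDae : ∀ᵐ g ∂m, |G' (un n) g - G' u g|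
        ≤ (∫⁻ e, ENNReal.ofReal (dfn n e) ∂(P g)).toReal := by
      filter_upwards [hfinD, hfinWn, hfinWu] with g h1 h2 h3
      have hWnint : Integrable (W (un n)) (P g) :=
        hPint _ (hW_meas (un n) (hunmeas n)) (hWnonneg _) g (h2 n)
      have hWuint : Integrable (W u) (P g) :=
        hPint _ (hW_meas u humeas) (hWnonneg _) g h3
      have hdint : Integrable (dfn n) (P g) :=
        hPint _ (hdfn_meas n) (hdfn_nonneg n) g (h1 n)
      have hΦd : ∀ p : Set.Icc (-pil) pib,
          |Φ (un n) (↑p) g - Φ u (↑p) g| ≤ ∫ e, dfn n e ∂(P g) := by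
        intro p
        rw [hΦdef]
        simp only
        rw [← integral_sub (hψint (un n) (hunmeas n) (hMun n) g hWnint (↑p) (hp_abs p))
          (hψint u humeas hMu g hWuint (↑p) (hp_abs p))]
        rw [← Real.norm_eq_abs]
        refine (norm_integral_le_integral_norm _).trans ?_
        apply integral_mono
          ((hψint (un n) (hunmeas n) (hMun n) g hWnint (↑p) (hp_abs p)).sub
            (hψint u humeas hMu g hWuint (↑p) (hp_abs p))).norm hdint
        intro e
        simp only [Pi.sub_apply, Real.norm_eq_abs]
        exact (hψdiff (un n) u (↑p) g e).trans (hphid n (↑p) (hp_abs p) e)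
      have hinf : |G' (un n) g - G' u g| ≤ ∫ e, dfn n e ∂(P g) := by
        rw [hG'def]
        exact abs_ciInf_sub_ciInf (hG'bddb (un n) (hMun n) g) (hG'bddb u hMu g) hΦd
      have heq : (∫ e, dfn n e ∂(P g))
          = (∫⁻ e, ENNReal.ofReal (dfn n e) ∂(P g)).toReal := by
        rw [integral_eq_lintegral_of_nonneg_ae (ae_of_all _ (hdfn_nonneg n))
          (hdfn_meas n).aestronglyMeasurable]
      rw [← heq]
      exact hinf
    -- integrate the bound
    have hDmeas : Measurable (fun g => |G' (un n) g - G' u g|) :=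
      ((hG'meas (un n) (hunmeas n) (hMun n)).sub (hG'meas u humeas hMu)).abs
    calc |∫ g, (G' (un n) g - G' u g) ∂m|
        ≤ ∫ g, |G' (un n) g - G' u g| ∂m := by
          rw [← Real.norm_eq_abs]
          refine (norm_integral_le_integral_norm _).trans ?_
          apply le_of_eq
          apply integral_congr_ae
          exact ae_of_all _ fun g => Real.norm_eq_abs _
      _ = (∫⁻ g, ENNReal.ofReal (|G' (un n) g - G' u g|) ∂m).toReal := by
          rw [integral_eq_lintegral_of_nonneg_ae (ae_of_all _ fun g => abs_nonneg _)
            hDmeas.aestronglyMeasurable]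
      _ ≤ T n := by
          have hle : (∫⁻ g, ENNReal.ofReal (|G' (un n) g - G' u g|) ∂m)
              ≤ ENNReal.ofReal (T n) := by
            have hstep : (∫⁻ g, ENNReal.ofReal (|G' (un n) g - G' u g|) ∂m)
                ≤ ∫⁻ g, (∫⁻ e, ENNReal.ofReal (dfn n e) ∂(P g)) ∂m := by
              apply lintegral_mono_ae
              filter_upwards [hDae, hfinD] with g hg hfg
              calc ENNReal.ofReal (|G' (un n) g - G' u g|)
                  ≤ ENNReal.ofReal ((∫⁻ e, ENNReal.ofReal (dfn n e) ∂(P g)).toReal) :=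
                    ENNReal.ofReal_le_ofReal hg
                _ = ∫⁻ e, ENNReal.ofReal (dfn n e) ∂(P g) := by
                    rw [ENNReal.ofReal_toReal (hfg n)]
            refine hstep.trans ?_
            rw [hlint _ (hdfn_meas n).ennreal_ofReal]
            have h1 : (∫⁻ e in {e | γ e ≠ 0}, ENNReal.ofReal (dfn n e) ∂ν)
                ≤ ∫⁻ e, ENNReal.ofReal (dfn n e) ∂ν :=
              lintegral_mono' Measure.restrict_le_self le_rfl
            have h2 : (∫⁻ e, ENNReal.ofReal (dfn n e) ∂ν) = ENNReal.ofReal (T n) := by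
              rw [hTdef]
              exact (ofReal_integral_eq_lintegral_ofReal (hdfn_int n)
                (ae_of_all _ (hdfn_nonneg n))).symm
            rw [← h2]
            exact h1
          calc (∫⁻ g, ENNReal.ofReal (|G' (un n) g - G' u g|) ∂m).toReal
              ≤ (ENNReal.ofReal (T n)).toReal :=
                ENNReal.toReal_mono ENNReal.ofReal_ne_top hle
            _ = T n := ENNReal.toReal_ofReal (hT_nonneg n)
  -- ===================== final assembly =====================
  rw [← tendsto_sub_nhds_zero_iff]
  have hb2 : Filter.Tendsto (fun n => T n + T n) Filter.atTop (nhds 0) := by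
    have := hT_tendsto.add hT_tendsto
    simpa using this
  apply squeeze_zero_norm _ hb2
  · intro n
    rw [Real.norm_eq_abs]
    have hd : fdrv ν μ η γ K lam sig Cke pil pib z (un n)
        - fdrv ν μ η γ K lam sig Cke pil pib z u
        = ((⨅ p : Set.Icc (-pil) pib, f1d ν η γ lam sig Cke z (un n) (↑p))
            - ⨅ p : Set.Icc (-pil) pib, f1d ν η γ lam sig Cke z u (↑p))
          + ((∫ g in ({0}ᶜ : Set ℝ),
              (⨅ p : Set.Icc (-pil) pib, f2d η γ K lam g (un n) (↑p)) ∂μ)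
            - ∫ g in ({0}ᶜ : Set ℝ),
              (⨅ p : Set.Icc (-pil) pib, f2d η γ K lam g u (↑p)) ∂μ) := by
      unfold fdrv
      ring
    rw [hd]
    calc |_ + _| ≤ _ + _ := abs_add_le _ _
      _ ≤ T n + T n := add_le_add (hF1 n) (hF2 n)
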